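/- Let φ₀, φ₁, φ₂, φ₃ : ℝ → Matrix (Fin n) (Fin n) ℂ be differentiable functions satisfying the system dφ₀/dt = [φ₀,φ₁], dφ₁/dt = [φ₀,φ₂], dφ₂/dt = [φ₀,φ₃], dφ₃/dt = 0 for all t. Then for every z ∈ ℂ with z ≠ 0 and every t ∈ ℝ, the function φ(z,t) = φ₀(t) + z·φ₁(t) + z²·φ₂(t) + z³·φ₃(t) satisfies the Lax equation d/dt φ(z,t) = [φ₀(t)/z, φ(z,t)]. -/

import Mathlib

/-- If `(φ₀, φ₁, φ₂, φ₃)` satisfies the system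
`dφ₀/dt = [φ₀,φ₁]`, `dφ₁/dt = [φ₀,φ₂]`, `dφ₂/dt = [φ₀,φ₃]`, `dφ₃/dt = 0`,
then for every `z ≠ 0` the matrix `φ(z,t) = φ₀ + z φ₁ + z² φ₂ + z³ φ₃` satisfies
the Lax equation `dφ/dt = [φ₀/z, φ]`.  Derivatives are taken entrywise. -/
theorem nahm_flow_degree_lax {n : ℕ}
    (φ₀ φ₁ φ₂ φ₃ : ℝ → Matrix (Fin n) (Fin n) ℂ)
    (hφ₀ : ∀ i j, Differentiable ℝ fun t => φ₀ t i j)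
    (hφ₁ : ∀ i j, Differentiable ℝ fun t => φ₁ t i j)
    (hφ₂ : ∀ i j, Differentiable ℝ fun t => φ₂ t i j)
    (hφ₃ : ∀ i j, Differentiable ℝ fun t => φ₃ t i j)
    (h0 : ∀ t i j, deriv (fun s => φ₀ s i j) t
        = (φ₀ t * φ₁ t - φ₁ t * φ₀ t) i j)
    (h1 : ∀ t i j, deriv (fun s => φ₁ s i j) t
        = (φ₀ t * φ₂ t - φ₂ t * φ₀ t) i j)
    (h2 : ∀ t i j, deriv (fun s => φ₂ s i j) t
        = (φ₀ t * φ₃ t - φ₃ t * φ₀ t) i j)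
    (h3 : ∀ t i j, deriv (fun s => φ₃ s i j) t = 0) :
    ∀ z : ℂ, z ≠ 0 → ∀ t : ℝ, ∀ i j,
      deriv (fun s => (φ₀ s + z • φ₁ s + z ^ 2 • φ₂ s + z ^ 3 • φ₃ s) i j) t
        = ((z⁻¹ • φ₀ t) * (φ₀ t + z • φ₁ t + z ^ 2 • φ₂ t + z ^ 3 • φ₃ t)
            - (φ₀ t + z • φ₁ t + z ^ 2 • φ₂ t + z ^ 3 • φ₃ t) * (z⁻¹ • φ₀ t)) i j := by
  intro z hz t i j
  have hmat : (z⁻¹ • φ₀ t) * (φ₀ t + z • φ₁ t + z ^ 2 • φ₂ t + z ^ 3 • φ₃ t)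
      - (φ₀ t + z • φ₁ t + z ^ 2 • φ₂ t + z ^ 3 • φ₃ t) * (z⁻¹ • φ₀ t)
      = (φ₀ t * φ₁ t - φ₁ t * φ₀ t) + z • (φ₀ t * φ₂ t - φ₂ t * φ₀ t)
        + z ^ 2 • (φ₀ t * φ₃ t - φ₃ t * φ₀ t) := by
    simp only [mul_add, add_mul, smul_mul_assoc, mul_smul_comm, smul_smul, smul_sub, smul_add]
    match_scalars <;> field_simp <;> ring
  rw [hmat]
  have key : (fun s => (φ₀ s + z • φ₁ s + z ^ 2 • φ₂ s + z ^ 3 • φ₃ s) i j)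
      = fun s => φ₀ s i j + z * φ₁ s i j + z ^ 2 * φ₂ s i j + z ^ 3 * φ₃ s i j := by
    funext s
    simp [Matrix.add_apply, Matrix.smul_apply, smul_eq_mul]
  rw [key]
  rw [deriv_fun_add (((hφ₀ i j).fun_add ((hφ₁ i j).const_mul z)).fun_add
        ((hφ₂ i j).const_mul (z ^ 2)) t) ((hφ₃ i j).const_mul (z ^ 3) t),
      deriv_fun_add ((hφ₀ i j).fun_add ((hφ₁ i j).const_mul z) t) ((hφ₂ i j).const_mul (z ^ 2) t),
      deriv_fun_add (hφ₀ i j t) ((hφ₁ i j).const_mul z t),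
      deriv_const_mul z (hφ₁ i j t), deriv_const_mul (z ^ 2) (hφ₂ i j t),
      deriv_const_mul (z ^ 3) (hφ₃ i j t), h0, h1, h2, h3]
  simp [Matrix.add_apply, Matrix.smul_apply, smul_eq_mul]
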